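/- Let P ⊂ ℝ² be finite and let B₁, B₂, B₃ be finite families of axis-parallel boxes in ℝ² such that every transversal {B₁, B₂, B₃} with B_i ∈ B_i satisfies B₁ ∩ B₂ ∩ B₃ ∩ P ≠ ∅ (contains at least one point of P). Then there exists j ∈ {1,2,3} and a subset S ⊆ P with |S| ≤ 2 such that every box of B_j contains a point of S. -/

import Mathlib

/-- An axis-parallel box in `ℝ^d`: a product of `d` closed intervals. -/
def IsBox {d : ℕ} (B : Set (Fin d → ℝ)) : Prop :=
  ∃ a b : Fin d → ℝ, B = {x | ∀ i, x i ∈ Set.Icc (a i) (b i)}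

open Classical in
/-- Lower corner of a box (junk value if not a box). -/
noncomputable def boxLo (B : Set (Fin 2 → ℝ)) : Fin 2 → ℝ :=
  if h : IsBox B then h.choose else 0

open Classical in
/-- Upper corner of a box (junk value if not a box). -/
noncomputable def boxHi (B : Set (Fin 2 → ℝ)) : Fin 2 → ℝ :=
  if h : IsBox B then h.choose_spec.choose else 0

lemma mem_box {B : Set (Fin 2 → ℝ)} (h : IsBox B) (z : Fin 2 → ℝ) :
    z ∈ B ↔ ∀ i, boxLo B i ≤ z i ∧ z i ≤ boxHi B i := by
  classical
  simp only [boxLo, boxHi, dif_pos h]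
  conv_lhs => rw [h.choose_spec.choose_spec]
  simp [Set.mem_Icc, Set.mem_setOf_eq]

lemma fin3_min (f : Fin 3 → ℝ) : ∃ m, ∀ j, f m ≤ f j := by
  rcases le_total (f 0) (f 1) with h01 | h01
  · rcases le_total (f 0) (f 2) with h02 | h02
    · exact ⟨0, fun j => by fin_cases j <;> simp <;> linarith⟩
    · exact ⟨2, fun j => by fin_cases j <;> simp <;> linarith⟩
  · rcases le_total (f 1) (f 2) with h12 | h12
    · exact ⟨1, fun j => by fin_cases j <;> simp <;> linarith⟩
    · exact ⟨2, fun j => by fin_cases j <;> simp <;> linarith⟩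

lemma fin3_pair (g : Fin 3 → ℝ) (m : Fin 3) :
    ∃ u x : Fin 3, u ≠ x ∧ u ≠ m ∧ x ≠ m ∧ g x ≤ g u := by
  fin_cases m
  · rcases le_total (g 1) (g 2) with hg | hg
    · exact ⟨2, 1, by decide, by decide, by decide, hg⟩
    · exact ⟨1, 2, by decide, by decide, by decide, hg⟩
  · rcases le_total (g 0) (g 2) with hg | hg
    · exact ⟨2, 0, by decide, by decide, by decide, hg⟩
    · exact ⟨0, 2, by decide, by decide, by decide, hg⟩
  · rcases le_total (g 0) (g 1) with hg | hg
    · exact ⟨1, 0, by decide, by decide, by decide, hg⟩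
    · exact ⟨0, 1, by decide, by decide, by decide, hg⟩

/-- Quantitative colorful Halman theorem, case `d = 2`, `n = 1`: if every transversal of
three finite families of boxes in the plane contains a point of `P` in its intersection,
then some family can be pierced by at most two points of `P`. -/
theorem stmt_11 (P : Finset (Fin 2 → ℝ)) (F : Fin 3 → Finset (Set (Fin 2 → ℝ)))
    (hbox : ∀ j, ∀ b ∈ F j, IsBox b)
    (h : ∀ f : Fin 3 → Set (Fin 2 → ℝ), (∀ j, f j ∈ F j) →
      ∃ p ∈ P, ∀ j, p ∈ f j) :
    ∃ j : Fin 3, ∃ S ⊆ P, S.card ≤ 2 ∧ ∀ b ∈ F j, ∃ p ∈ S, p ∈ b := by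
  classical
  by_cases hne : ∀ j, (F j).Nonempty
  swap
  · -- some family is empty: take it with S = ∅
    push_neg at hne
    obtain ⟨j, hj⟩ := hne
    exact ⟨j, ∅, Finset.empty_subset _, by simp, by simp [hj]⟩
  -- extremal boxes in each family
  have exA : ∀ j, ∃ A ∈ F j, ∀ b ∈ F j, boxLo b 0 ≤ boxLo A 0 := fun j =>
    Finset.exists_max_image (F j) (fun b => boxLo b 0) (hne j)
  have exB : ∀ j, ∃ A ∈ F j, ∀ b ∈ F j, boxHi A 0 ≤ boxHi b 0 := fun j =>
    Finset.exists_min_image (F j) (fun b => boxHi b 0) (hne j)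
  have exC : ∀ j, ∃ A ∈ F j, ∀ b ∈ F j, boxLo b 1 ≤ boxLo A 1 := fun j =>
    Finset.exists_max_image (F j) (fun b => boxLo b 1) (hne j)
  have exE : ∀ j, ∃ A ∈ F j, ∀ b ∈ F j, boxHi A 1 ≤ boxHi b 1 := fun j =>
    Finset.exists_min_image (F j) (fun b => boxHi b 1) (hne j)
  choose A hAmem hAmax using exA
  choose Bb hBmem hBmin using exB
  choose Cc hCmem hCmax using exC
  choose Ee hEmem hEmin using exE
  -- Case 1: some point of P lies in the "core" of some family
  by_cases hQ : ∃ z ∈ P, ∃ j, boxLo (A j) 0 ≤ z 0 ∧ z 0 ≤ boxHi (Bb j) 0 ∧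
      boxLo (Cc j) 1 ≤ z 1 ∧ z 1 ≤ boxHi (Ee j) 1
  · obtain ⟨z, hzP, j, h1, h2, h3, h4⟩ := hQ
    refine ⟨j, {z}, by simpa using hzP, by simp, ?_⟩
    intro b hb
    refine ⟨z, Finset.mem_singleton_self z, ?_⟩
    rw [mem_box (hbox j b hb)]
    intro i
    fin_cases i
    · exact ⟨le_trans (hAmax j b hb) h1, le_trans h2 (hBmin j b hb)⟩
    · exact ⟨le_trans (hCmax j b hb) h3, le_trans h4 (hEmin j b hb)⟩
  push_neg at hQ
  -- Case 2: the main construction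
  obtain ⟨m, hm⟩ := fin3_min (fun j => boxHi (Ee j) 1)
  obtain ⟨u, x, hux, hum, hxm, hD⟩ := fin3_pair (fun j => boxLo (Cc j) 1) m
  replace hm : ∀ j, boxHi (Ee m) 1 ≤ boxHi (Ee j) 1 := hm
  replace hD : boxLo (Cc x) 1 ≤ boxLo (Cc u) 1 := hD
  -- stab points: for each X in F x, a point of P in X ∩ (Cc u) ∩ (Ee m)
  have key : ∀ X ∈ F x, ∃ z, z ∈ P ∧ z ∈ X ∧ z ∈ Cc u ∧ z ∈ Ee m := by
    intro X hX
    have hmem : ∀ j, (fun j => if j = x then X else if j = u then Cc j else Ee j) j ∈ F j := by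
      intro j
      by_cases hjx : j = x
      · subst hjx; simpa using hX
      · simp only [if_neg hjx]
        by_cases hju : j = u
        · rw [if_pos hju]; exact hCmem j
        · rw [if_neg hju]; exact hEmem j
    obtain ⟨z, hzP, hz⟩ := h _ hmem
    refine ⟨z, hzP, ?_, ?_, ?_⟩
    · have := hz x; rwa [if_pos rfl] at this
    · have := hz u; rwa [if_neg (by exact fun hh => hux hh), if_pos rfl] at this
    · have := hz m
      rwa [if_neg (by exact fun hh => hxm hh.symm),
           if_neg (by exact fun hh => hum hh.symm)] at this
  choose! stab hstabP hstabX hstabC hstabE using key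
  -- cross facts: every box of F x meets the window of family u in coordinate 0
  have cross1 : ∀ X ∈ F x, boxLo X 0 ≤ boxHi (Bb u) 0 := by
    intro X hX
    have hmem : ∀ j, (fun j => if j = x then X else if j = u then Bb j else Ee j) j ∈ F j := by
      intro j
      by_cases hjx : j = x
      · subst hjx; simpa using hX
      · simp only [if_neg hjx]
        by_cases hju : j = u
        · rw [if_pos hju]; exact hBmem j
        · rw [if_neg hju]; exact hEmem j
    obtain ⟨z, hzP, hz⟩ := h _ hmem
    have hz1 : z ∈ X := by have := hz x; rwa [if_pos rfl] at this
    have hz2 : z ∈ Bb u := by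
      have := hz u; rwa [if_neg (by exact fun hh => hux hh), if_pos rfl] at this
    have e1 := ((mem_box (hbox x X hX) z).1 hz1 0).1
    have e2 := ((mem_box (hbox u (Bb u) (hBmem u)) z).1 hz2 0).2
    linarith
  have cross2 : ∀ X ∈ F x, boxLo (A u) 0 ≤ boxHi X 0 := by
    intro X hX
    have hmem : ∀ j, (fun j => if j = x then X else if j = u then A j else Ee j) j ∈ F j := by
      intro j
      by_cases hjx : j = x
      · subst hjx; simpa using hX
      · simp only [if_neg hjx]
        by_cases hju : j = u
        · rw [if_pos hju]; exact hAmem j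
        · rw [if_neg hju]; exact hEmem j
    obtain ⟨z, hzP, hz⟩ := h _ hmem
    have hz1 : z ∈ X := by have := hz x; rwa [if_pos rfl] at this
    have hz2 : z ∈ A u := by
      have := hz u; rwa [if_neg (by exact fun hh => hux hh), if_pos rfl] at this
    have e1 := ((mem_box (hbox x X hX) z).1 hz1 0).2
    have e2 := ((mem_box (hbox u (A u) (hAmem u)) z).1 hz2 0).1
    linarith
  -- a fallback point of P
  obtain ⟨p₀, hp₀P, _⟩ := h (fun j => Cc j) (fun j => hCmem j)
  -- coordinate-1 bounds for stabs, universal over F x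
  have stab1lo : ∀ X ∈ F x, ∀ X' ∈ F x, boxLo X' 1 ≤ stab X 1 := by
    intro X hX X' hX'
    have h1 : boxLo X' 1 ≤ boxLo (Cc x) 1 := hCmax x X' hX'
    have h2 : boxLo (Cc u) 1 ≤ stab X 1 :=
      ((mem_box (hbox u (Cc u) (hCmem u)) _).1 (hstabC X hX) 1).1
    linarith
  have stab1hi : ∀ X ∈ F x, ∀ X' ∈ F x, stab X 1 ≤ boxHi X' 1 := by
    intro X hX X' hX'
    have h1 : stab X 1 ≤ boxHi (Ee m) 1 :=
      ((mem_box (hbox m (Ee m) (hEmem m)) _).1 (hstabE X hX) 1).2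
    have h2 : boxHi (Ee x) 1 ≤ boxHi X' 1 := hEmin x X' hX'
    have h3 : boxHi (Ee m) 1 ≤ boxHi (Ee x) 1 := hm x
    linarith
  -- the "left" piercing point
  have left : ∃ p ∈ P, ∀ X ∈ F x, stab X 0 < boxLo (A u) 0 → p ∈ X := by
    by_cases hfn : ∃ X₀ ∈ F x, stab X₀ 0 < boxLo (A u) 0
    · obtain ⟨X₀, hX₀, hX₀lt⟩ := hfn
      set s : Finset (Set (Fin 2 → ℝ)) :=
        (F x).filter (fun X => stab X 0 < boxLo (A u) 0) with hs
      have hsne : s.Nonempty := ⟨X₀, Finset.mem_filter.2 ⟨hX₀, hX₀lt⟩⟩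
      obtain ⟨Xm, hXm, hXmax⟩ := Finset.exists_max_image s (fun X => stab X 0) hsne
      have hXmF : Xm ∈ F x := (Finset.mem_filter.1 hXm).1
      have hXmlt : stab Xm 0 < boxLo (A u) 0 := (Finset.mem_filter.1 hXm).2
      refine ⟨stab Xm, hstabP Xm hXmF, ?_⟩
      intro X hX hlt
      rw [mem_box (hbox x X hX)]
      have h1 : boxLo X 0 ≤ stab X 0 :=
        ((mem_box (hbox x X hX) _).1 (hstabX X hX) 0).1
      have h2 : stab X 0 ≤ stab Xm 0 :=
        hXmax X (Finset.mem_filter.2 ⟨hX, hlt⟩)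
      have c1 : boxLo X 0 ≤ stab Xm 0 := le_trans h1 h2
      have c2 : stab Xm 0 ≤ boxHi X 0 := le_trans (le_of_lt hXmlt) (cross2 X hX)
      intro i
      fin_cases i
      · exact ⟨c1, c2⟩
      · exact ⟨stab1lo Xm hXmF X hX, stab1hi Xm hXmF X hX⟩
    · push_neg at hfn
      exact ⟨p₀, hp₀P, fun X hX hlt => absurd hlt (not_lt.2 (hfn X hX))⟩
  -- for stabs on the right of the window, they are strictly right of the window
  have hgt : ∀ X ∈ F x, boxLo (A u) 0 ≤ stab X 0 → boxHi (Bb u) 0 < stab X 0 := by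
    intro X hX hge
    by_contra hle
    push_neg at hle
    have hc := hQ (stab X) (hstabP X hX) u hge hle
      (((mem_box (hbox u (Cc u) (hCmem u)) _).1 (hstabC X hX) 1).1)
    have h1 : stab X 1 ≤ boxHi (Ee m) 1 :=
      ((mem_box (hbox m (Ee m) (hEmem m)) _).1 (hstabE X hX) 1).2
    have h2 : boxHi (Ee m) 1 ≤ boxHi (Ee u) 1 := hm u
    linarith
  -- the "right" piercing point
  have right : ∃ q ∈ P, ∀ X ∈ F x, boxLo (A u) 0 ≤ stab X 0 → q ∈ X := by
    by_cases hfn : ∃ X₀ ∈ F x, boxLo (A u) 0 ≤ stab X₀ 0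
    · obtain ⟨X₀, hX₀, hX₀ge⟩ := hfn
      set s : Finset (Set (Fin 2 → ℝ)) :=
        (F x).filter (fun X => boxLo (A u) 0 ≤ stab X 0) with hs
      have hsne : s.Nonempty := ⟨X₀, Finset.mem_filter.2 ⟨hX₀, hX₀ge⟩⟩
      obtain ⟨Xn, hXn, hXmin⟩ := Finset.exists_min_image s (fun X => stab X 0) hsne
      have hXnF : Xn ∈ F x := (Finset.mem_filter.1 hXn).1
      have hXnge : boxLo (A u) 0 ≤ stab Xn 0 := (Finset.mem_filter.1 hXn).2
      refine ⟨stab Xn, hstabP Xn hXnF, ?_⟩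
      intro X hX hge
      rw [mem_box (hbox x X hX)]
      have c1 : boxLo X 0 ≤ stab Xn 0 :=
        le_trans (cross1 X hX) (le_of_lt (hgt Xn hXnF hXnge))
      have h1 : stab Xn 0 ≤ stab X 0 :=
        hXmin X (Finset.mem_filter.2 ⟨hX, hge⟩)
      have h2 : stab X 0 ≤ boxHi X 0 :=
        ((mem_box (hbox x X hX) _).1 (hstabX X hX) 0).2
      have c2 : stab Xn 0 ≤ boxHi X 0 := le_trans h1 h2
      intro i
      fin_cases i
      · exact ⟨c1, c2⟩
      · exact ⟨stab1lo Xn hXnF X hX, stab1hi Xn hXnF X hX⟩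
    · push_neg at hfn
      exact ⟨p₀, hp₀P, fun X hX hge => absurd (hfn X hX) (not_lt.2 hge)⟩
  obtain ⟨p, hpP, hp⟩ := left
  obtain ⟨q, hqP, hq⟩ := right
  refine ⟨x, {p, q}, ?_, ?_, ?_⟩
  · intro z hz
    rcases Finset.mem_insert.1 hz with rfl | hz
    · exact hpP
    · rw [Finset.mem_singleton.1 hz]; exact hqP
  · exact le_trans (Finset.card_insert_le _ _) (by simp)
  · intro b hb
    rcases lt_or_ge (stab b 0) (boxLo (A u) 0) with hc | hc
    · exact ⟨p, by simp, hp b hb hc⟩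
    · exact ⟨q, by simp, hq b hb hc⟩
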